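/- For all a, b ∈ Λ²₊V, the endomorphisms of V satisfy K_a ∘ K_b = −⟨a,b⟩·Id + K_{a×b} (identity (6) of the paper). In particular, if σ ∈ Λ²₊V is a unit vector then K_σ ∘ K_σ = −Id. -/

import Mathlib

open scoped RealInnerProductSpace

set_option maxHeartbeats 8000000 in
/-- Let `V` be a 4-dimensional oriented real inner product space with Hodge
star `⋆` on `Λ²V`, `Λ²₊V` the `(+1)`-eigenspace of `⋆`, oriented so that
`(s₁,s₂,s₃) = (E₁∧E₂+E₃∧E₄, E₁∧E₃+E₄∧E₂, E₁∧E₄+E₂∧E₃)` is positively oriented for any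
positively oriented orthonormal basis of `V`, and `×` the resulting cross product on `Λ²₊V`
(characterized by `s₁×s₂=s₃`, `s₂×s₃=s₁`, `s₃×s₁=s₂` and antisymmetry).
For all `a, b ∈ Λ²₊V` the endomorphisms of `V` satisfy `K_a∘K_b = −⟨a,b⟩·Id + K_{a×b}`.
In particular, if `σ ∈ Λ²₊V` is a unit vector then `K_σ∘K_σ = −Id`. -/
theorem stmt_3 {V L : Type*}
    [NormedAddCommGroup V] [InnerProductSpace ℝ V]
    [NormedAddCommGroup L] [InnerProductSpace ℝ L]
    (h4 : Module.finrank ℝ V = 4)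
    (o : Orientation ℝ V (Fin 4))
    (wedge : V →ₗ[ℝ] V →ₗ[ℝ] L)
    (wedge_self : ∀ v : V, wedge v v = 0)
    (wedge_span : Submodule.span ℝ {x : L | ∃ u v : V, wedge u v = x} = ⊤)
    (inner_wedge : ∀ v₁ v₂ v₃ v₄ : V,
      ⟪wedge v₁ v₂, wedge v₃ v₄⟫ =
        (1 / 2) * (⟪v₁, v₃⟫ * ⟪v₂, v₄⟫ - ⟪v₁, v₄⟫ * ⟪v₂, v₃⟫))
    (hodge : L →ₗ[ℝ] L)
    (hodge_hodge : ∀ x : L, hodge (hodge x) = x)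
    (hodge_wedge : ∀ b : OrthonormalBasis (Fin 4) ℝ V, b.toBasis.orientation = o →
      hodge (wedge (b 0) (b 1)) = wedge (b 2) (b 3) ∧
      hodge (wedge (b 0) (b 2)) = wedge (b 3) (b 1) ∧
      hodge (wedge (b 0) (b 3)) = wedge (b 1) (b 2))
    (cross : L →ₗ[ℝ] L →ₗ[ℝ] L)
    (hcross_basis : ∀ b : OrthonormalBasis (Fin 4) ℝ V, b.toBasis.orientation = o →
      cross (wedge (b 0) (b 1) + wedge (b 2) (b 3)) (wedge (b 0) (b 2) + wedge (b 3) (b 1))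
          = wedge (b 0) (b 3) + wedge (b 1) (b 2) ∧
      cross (wedge (b 0) (b 2) + wedge (b 3) (b 1)) (wedge (b 0) (b 3) + wedge (b 1) (b 2))
          = wedge (b 0) (b 1) + wedge (b 2) (b 3) ∧
      cross (wedge (b 0) (b 3) + wedge (b 1) (b 2)) (wedge (b 0) (b 1) + wedge (b 2) (b 3))
          = wedge (b 0) (b 2) + wedge (b 3) (b 1))
    (hcross_antisymm : ∀ x y : L, hodge x = x → hodge y = y → cross x y = -cross y x) :
    (∀ a b : L, hodge a = a → hodge b = b →
      ∀ Ka Kb Kab : V →ₗ[ℝ] V,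
        (∀ X Y : V, ⟪Ka X, Y⟫ = 2 * ⟪a, wedge X Y⟫) →
        (∀ X Y : V, ⟪Kb X, Y⟫ = 2 * ⟪b, wedge X Y⟫) →
        (∀ X Y : V, ⟪Kab X, Y⟫ = 2 * ⟪cross a b, wedge X Y⟫) →
        Ka ∘ₗ Kb = (-⟪a, b⟫) • (LinearMap.id : V →ₗ[ℝ] V) + Kab) ∧
    (∀ σ : L, hodge σ = σ → ‖σ‖ = 1 →
      ∀ K : V →ₗ[ℝ] V, (∀ X Y : V, ⟪K X, Y⟫ = 2 * ⟪σ, wedge X Y⟫) →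
        K ∘ₗ K = -(LinearMap.id : V →ₗ[ℝ] V)) := by
  obtain ⟨E, hE⟩ : ∃ E : OrthonormalBasis (Fin 4) ℝ V, E.toBasis.orientation = o :=
    ⟨_, o.finOrthonormalBasis_orientation (by norm_num) h4⟩
  have horth : ∀ i j : Fin 4, ⟪E i, E j⟫ = if i = j then (1:ℝ) else 0 := fun i j => by
    simpa using orthonormal_iff_ite.mp E.orthonormal i j
  have hanti : ∀ u v : V, wedge v u = -wedge u v := by
    intro u v
    have h0 := wedge_self (u + v)
    simp only [map_add, LinearMap.add_apply, wedge_self, zero_add, add_zero] at h0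
    exact eq_neg_of_add_eq_zero_left h0
  -- zero test
  have hzero : ∀ x : L, (∀ i j : Fin 4, i < j → ⟪x, wedge (E i) (E j)⟫ = 0) → x = 0 := by
    intro x hx
    have hx' : ∀ i j : Fin 4, ⟪x, wedge (E i) (E j)⟫ = 0 := by
      intro i j
      rcases lt_trichotomy i j with h | h | h
      · exact hx i j h
      · rw [h, wedge_self]; simp
      · rw [hanti]; simp [hx j i h]
    have key : ∀ u v : V, ⟪x, wedge u v⟫ = 0 := by
      intro u v
      rw [← E.sum_repr' u, ← E.sum_repr' v]
      simp [map_sum, inner_sum, LinearMap.sum_apply, map_smul, LinearMap.smul_apply,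
        real_inner_smul_right, hx']
    have hall : ∀ y ∈ Submodule.span ℝ {y : L | ∃ u v : V, wedge u v = y}, ⟪x, y⟫ = 0 := by
      intro y hy
      induction hy using Submodule.span_induction with
      | mem y hy => obtain ⟨u, v, rfl⟩ := hy; exact key u v
      | zero => simp
      | add y z _ _ hy hz => rw [inner_add_right, hy, hz, add_zero]
      | smul c y _ hy => rw [real_inner_smul_right, hy, mul_zero]
    have hmem : x ∈ Submodule.span ℝ {y : L | ∃ u v : V, wedge u v = y} := by
      rw [wedge_span]; trivial
    exact inner_self_eq_zero.mp (hall x hmem)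
  -- hodge values
  obtain ⟨h01, h02, h03⟩ := hodge_wedge E hE
  have h23 : hodge (wedge (E 2) (E 3)) = wedge (E 0) (E 1) := by rw [← h01, hodge_hodge]
  have h31 : hodge (wedge (E 3) (E 1)) = wedge (E 0) (E 2) := by rw [← h02, hodge_hodge]
  have h12 : hodge (wedge (E 1) (E 2)) = wedge (E 0) (E 3) := by rw [← h03, hodge_hodge]
  have h13 : hodge (wedge (E 1) (E 3)) = -wedge (E 0) (E 2) := by
    rw [hanti (E 3) (E 1), map_neg, h31]
  -- expansion in the six wedges
  have hexpand : ∀ x : L, x = (2*⟪x, wedge (E 0) (E 1)⟫) • wedge (E 0) (E 1)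
      + (2*⟪x, wedge (E 0) (E 2)⟫) • wedge (E 0) (E 2)
      + (2*⟪x, wedge (E 0) (E 3)⟫) • wedge (E 0) (E 3)
      + (2*⟪x, wedge (E 1) (E 2)⟫) • wedge (E 1) (E 2)
      + (2*⟪x, wedge (E 1) (E 3)⟫) • wedge (E 1) (E 3)
      + (2*⟪x, wedge (E 2) (E 3)⟫) • wedge (E 2) (E 3) := by
    intro x
    have h := hzero (x - ((2*⟪x, wedge (E 0) (E 1)⟫) • wedge (E 0) (E 1)
      + (2*⟪x, wedge (E 0) (E 2)⟫) • wedge (E 0) (E 2)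
      + (2*⟪x, wedge (E 0) (E 3)⟫) • wedge (E 0) (E 3)
      + (2*⟪x, wedge (E 1) (E 2)⟫) • wedge (E 1) (E 2)
      + (2*⟪x, wedge (E 1) (E 3)⟫) • wedge (E 1) (E 3)
      + (2*⟪x, wedge (E 2) (E 3)⟫) • wedge (E 2) (E 3))) ?_
    · exact sub_eq_zero.mp h
    · intro i j hij
      fin_cases i <;> fin_cases j <;>
        first
          | exact absurd hij (by decide)
          | (simp [inner_sub_left, inner_add_left, real_inner_smul_left, inner_wedge, horth,
               -inner_self_eq_norm_sq_to_K]
             <;> ring)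
  -- self-duality constraints
  have hsd : ∀ x : L, hodge x = x →
      ⟪x, wedge (E 2) (E 3)⟫ = ⟪x, wedge (E 0) (E 1)⟫ ∧
      ⟪x, wedge (E 1) (E 3)⟫ = -⟪x, wedge (E 0) (E 2)⟫ ∧
      ⟪x, wedge (E 1) (E 2)⟫ = ⟪x, wedge (E 0) (E 3)⟫ := by
    intro x hx
    refine ⟨?_, ?_, ?_⟩
    · conv_lhs => rw [← hx, hexpand x]
      simp [map_add, map_smul, h01, h02, h03, h12, h13, h23, inner_add_left,
        real_inner_smul_left, inner_neg_left, inner_wedge, horth, -inner_self_eq_norm_sq_to_K]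
      try ring
    · conv_lhs => rw [← hx, hexpand x]
      simp [map_add, map_smul, h01, h02, h03, h12, h13, h23, inner_add_left,
        real_inner_smul_left, inner_neg_left, inner_wedge, horth, -inner_self_eq_norm_sq_to_K]
      try ring
    · conv_lhs => rw [← hx, hexpand x]
      simp [map_add, map_smul, h01, h02, h03, h12, h13, h23, inner_add_left,
        real_inner_smul_left, inner_neg_left, inner_wedge, horth, -inner_self_eq_norm_sq_to_K]
      try ring
  -- introduce the self-dual basis as opaque atoms
  obtain ⟨s1, hs1def⟩ : ∃ z : L, z = wedge (E 0) (E 1) + wedge (E 2) (E 3) := ⟨_, rfl⟩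
  obtain ⟨s2, hs2def⟩ : ∃ z : L, z = wedge (E 0) (E 2) + wedge (E 3) (E 1) := ⟨_, rfl⟩
  obtain ⟨s3, hs3def⟩ : ∃ z : L, z = wedge (E 0) (E 3) + wedge (E 1) (E 2) := ⟨_, rfl⟩
  have hdecomp : ∀ x : L, hodge x = x → ∃ A B C : ℝ, x = A • s1 + B • s2 + C • s3 := by
    intro x hx
    obtain ⟨e1, e2, e3⟩ := hsd x hx
    refine ⟨2*⟪x, wedge (E 0) (E 1)⟫, 2*⟪x, wedge (E 0) (E 2)⟫, 2*⟪x, wedge (E 0) (E 3)⟫, ?_⟩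
    rw [hs1def, hs2def, hs3def, hanti (E 1) (E 3)]
    conv_lhs => rw [hexpand x]
    rw [e1, e2, e3]
    module
  -- the s_i are self-dual
  have hsd1 : hodge s1 = s1 := by rw [hs1def, map_add, h01, h23, add_comm]
  have hsd2 : hodge s2 = s2 := by rw [hs2def, map_add, h02, h31, add_comm]
  have hsd3 : hodge s3 = s3 := by rw [hs3def, map_add, h03, h12, add_comm]
  -- cross product table
  obtain ⟨t12, t23, t31⟩ := hcross_basis E hE
  rw [← hs1def, ← hs2def, ← hs3def] at t12 t23 t31
  have helper : ∀ z : L, z = -z → z = 0 := by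
    intro z hz
    have h2 : z + z = 0 := by nth_rewrite 2 [hz]; simp
    have h3 : (2:ℝ) • z = 0 := by rw [two_smul]; exact h2
    simpa using h3
  have t11 : cross s1 s1 = 0 := helper _ (hcross_antisymm _ _ hsd1 hsd1)
  have t22 : cross s2 s2 = 0 := helper _ (hcross_antisymm _ _ hsd2 hsd2)
  have t33 : cross s3 s3 = 0 := helper _ (hcross_antisymm _ _ hsd3 hsd3)
  have t21 : cross s2 s1 = -s3 := by rw [hcross_antisymm _ _ hsd2 hsd1, t12]
  have t32 : cross s3 s2 = -s1 := by rw [hcross_antisymm _ _ hsd3 hsd2, t23]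
  have t13 : cross s1 s3 = -s2 := by rw [hcross_antisymm _ _ hsd1 hsd3, t31]
  have hval : ∀ (X1 X2 X3 : ℝ) (x : L), x = X1 • s1 + X2 • s2 + X3 • s3 →
      ∀ k l : Fin 4, 2*⟪x, wedge (E k) (E l)⟫ =
        !![0, X1, X2, X3; -X1, 0, X3, -X2; -X2, -X3, 0, X1; -X3, X2, -X1, 0] k l := by
    intro X1 X2 X3 x hx k l
    rw [hx, hs1def, hs2def, hs3def]
    fin_cases k <;> fin_cases l <;>
      (simp [inner_add_left, real_inner_smul_left, inner_wedge, horth, -inner_self_eq_norm_sq_to_K]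
       try ring_nf)
  -- generic formula for K on basis vectors
  have hKgen : ∀ (x : L) (K : V →ₗ[ℝ] V), (∀ X Y : V, ⟪K X, Y⟫ = 2 * ⟪x, wedge X Y⟫) →
      ∀ k : Fin 4, K (E k) = (2*⟪x, wedge (E k) (E 0)⟫) • E 0
        + (2*⟪x, wedge (E k) (E 1)⟫) • E 1
        + (2*⟪x, wedge (E k) (E 2)⟫) • E 2
        + (2*⟪x, wedge (E k) (E 3)⟫) • E 3 := by
    intro x K hK k
    have veq : ∀ u v : V, (∀ l : Fin 4, ⟪u, E l⟫ = ⟪v, E l⟫) → u = v := by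
      intro u v h
      rw [← E.sum_repr' u, ← E.sum_repr' v]
      refine Finset.sum_congr rfl fun l _ => ?_
      rw [real_inner_comm u (E l), h l, real_inner_comm]
    apply veq
    intro l
    rw [hK]
    fin_cases l <;>
      (simp [inner_add_left, real_inner_smul_left, horth]) <;> ring
  -- part 1
  have main : ∀ a b : L, hodge a = a → hodge b = b →
      ∀ Ka Kb Kab : V →ₗ[ℝ] V,
        (∀ X Y : V, ⟪Ka X, Y⟫ = 2 * ⟪a, wedge X Y⟫) →
        (∀ X Y : V, ⟪Kb X, Y⟫ = 2 * ⟪b, wedge X Y⟫) →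
        (∀ X Y : V, ⟪Kab X, Y⟫ = 2 * ⟪cross a b, wedge X Y⟫) →
        Ka ∘ₗ Kb = (-⟪a, b⟫) • (LinearMap.id : V →ₗ[ℝ] V) + Kab := by
    intro a b hsa hsb Ka Kb Kab hKa hKb hKab
    obtain ⟨A1, A2, A3, ha⟩ := hdecomp a hsa
    obtain ⟨B1, B2, B3, hb⟩ := hdecomp b hsb
    have hab : ⟪a, b⟫ = A1*B1 + A2*B2 + A3*B3 := by
      rw [ha, hb, hs1def, hs2def, hs3def]
      simp [inner_add_left, inner_add_right, real_inner_smul_left, real_inner_smul_right,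
        inner_wedge, horth, -inner_self_eq_norm_sq_to_K]
      ring
    have hcab : cross a b = (A2*B3 - A3*B2) • s1 + (A3*B1 - A1*B3) • s2
        + (A1*B2 - A2*B1) • s3 := by
      rw [ha, hb]
      simp only [map_add, map_smul, LinearMap.add_apply, LinearMap.smul_apply,
        t11, t22, t33, t12, t23, t31, t21, t32, t13, smul_neg, smul_zero]
      module
    have hva := hval A1 A2 A3 a ha
    have hvb := hval B1 B2 B3 b hb
    have hvc := hval (A2*B3 - A3*B2) (A3*B1 - A1*B3) (A1*B2 - A2*B1) (cross a b) hcab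
    apply E.toBasis.ext
    intro k
    simp only [OrthonormalBasis.coe_toBasis, LinearMap.comp_apply, LinearMap.add_apply,
      LinearMap.smul_apply, LinearMap.id_apply]
    rw [hKgen b Kb hKb k]
    simp only [map_add, map_smul]
    rw [hKgen a Ka hKa 0, hKgen a Ka hKa 1, hKgen a Ka hKa 2, hKgen a Ka hKa 3,
      hKgen (cross a b) Kab hKab k, hab]
    simp only [hva, hvb, hvc]
    fin_cases k <;>
      (simp
       match_scalars <;> ring)
  refine ⟨main, ?_⟩
  intro σ hσ hn K hK
  have hc0 : cross σ σ = 0 := helper _ (hcross_antisymm σ σ hσ hσ)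
  have h0 : ∀ X Y : V, ⟪(0 : V →ₗ[ℝ] V) X, Y⟫ = 2 * ⟪cross σ σ, wedge X Y⟫ := by
    intro X Y; simp [hc0]
  have hmain := main σ σ hσ hσ K K 0 hK hK h0
  rw [hmain]
  have hσσ : ⟪σ, σ⟫ = 1 := by
    rw [real_inner_self_eq_norm_mul_norm, hn]; norm_num
  rw [hσσ]
  ext x
  simp
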